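/- Let M, a, s be positive integers with M > 1 such that ∑_{i=0}^{M-1} (a+i)^2 = s^2, and suppose M = 24·m₁ + 2 for a nonnegative integer m₁. Then for every prime p > 3 with p ≡ 3 (mod 4), there do not exist integers i ≥ 0 and q ≥ 1 with p ∤ q such that 24·m₁ + 3 = p^(2i+1)·q; equivalently, the exact power of p dividing M + 1 is even. -/

import Mathlib

lemma sumsq (A : ℤ) (M : ℕ) :
    12 * ∑ i ∈ Finset.range M, (A + i) ^ 2 = M * (3 * (2 * A + M - 1) ^ 2 + M ^ 2 - 1) := by
  induction M with
  | zero => simp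
  | succ n ih =>
    rw [Finset.sum_range_succ, mul_add, ih]
    push_cast
    ring

theorem stmt (M a s m₁ : ℕ) (hM : 1 < M) (ha : 1 ≤ a) (hs : 1 ≤ s)
    (hsum : ∑ i ∈ Finset.range M, (a + i) ^ 2 = s ^ 2)
    (hMeq : M = 24 * m₁ + 2) :
    ∀ p : ℕ, p.Prime → 3 < p → p % 4 = 3 →
      ¬ ∃ i q : ℕ, 1 ≤ q ∧ ¬ p ∣ q ∧ 24 * m₁ + 3 = p ^ (2 * i + 1) * q := by
  subst hMeq
  intro p hp hp3 hp4 ⟨i, q, hq1, hpq, heq⟩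
  set u : ℕ := 8 * m₁ + 1 with hu_def
  set c : ℕ := 24 * m₁ + 1 with hc_def
  set b : ℕ := 2 * a + 24 * m₁ + 1 with hb_def
  set k : ℕ := 2 * i + 1 with hk_def
  set M : ℕ := 24 * m₁ + 2 with hM_def
  have hs0 : s ≠ 0 := by omega
  have hb0 : b ≠ 0 := by omega
  have hM0 : M ≠ 0 := by omega
  -- q = 3 * q'
  have h3u : 3 * u = p ^ k * q := by omega
  have h3q : 3 ∣ q := by
    have h3p : (3:ℕ).Prime := by norm_num
    have h3 : (3:ℕ) ∣ p ^ k * q := ⟨u, h3u.symm⟩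
    rcases (Nat.Prime.dvd_mul h3p).mp h3 with h | h
    · exfalso
      have := h3p.dvd_of_dvd_pow h
      rcases (Nat.prime_dvd_prime_iff_eq h3p hp).mp this with rfl
      omega
    · exact h
  obtain ⟨q', rfl⟩ := h3q
  have hu : u = p ^ k * q' := by
    have : 3 * u = 3 * (p ^ k * q') := by rw [h3u]; ring
    omega
  have hpq' : ¬ p ∣ q' := fun h => hpq (Dvd.dvd.mul_left h 3)
  have hpu : p ∣ u := hu ▸ dvd_mul_of_dvd_left (dvd_pow_self p (by omega)) q'
  have hpM1 : p ∣ M + 1 := by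
    have : M + 1 = 3 * u := by omega
    rw [this]; exact hpu.mul_left 3
  have hpM : ¬ p ∣ M := by
    intro h
    have := Nat.dvd_sub hpM1 h
    simp at this
    omega
  have hpc : ¬ p ∣ c := by
    intro h
    have h2 : p ∣ 2 := by
      have : (M + 1) - c = 2 := by omega
      exact this ▸ Nat.dvd_sub hpM1 h
    have := Nat.le_of_dvd (by norm_num) h2
    omega
  have hp4d : ¬ (p ∣ 4) := by
    intro h
    have := Nat.le_of_dvd (by norm_num) h
    interval_cases p; simp_all
  -- key equation
  have hkey : 4 * s ^ 2 = M * (b ^ 2 + u * c) := by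
    have h1 := sumsq (a : ℤ) M
    have hcast : (∑ i ∈ Finset.range M, ((a:ℤ) + i) ^ 2) = (s:ℤ) ^ 2 := by
      exact_mod_cast congrArg (Nat.cast : ℕ → ℤ) hsum
    rw [hcast] at h1
    have h2 : (3:ℤ) * (4 * (s:ℤ) ^ 2) = 3 * ((M:ℕ) * ((b:ℕ) ^ 2 + (u:ℕ) * (c:ℕ)) : ℕ) := by
      push_cast [hM_def, hb_def, hu_def, hc_def]
      push_cast [hM_def] at h1
      linear_combination h1
    have h3 : (4 * (s:ℤ) ^ 2) = ((M:ℕ) * ((b:ℕ) ^ 2 + (u:ℕ) * (c:ℕ)) : ℕ) :=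
      mul_left_cancel₀ (by norm_num) h2
    exact_mod_cast h3
  set n : ℕ := b ^ 2 + u * c with hn_def
  have hn0 : n ≠ 0 := by positivity
  -- factorization of n is even
  have hfn : n.factorization p = 2 * s.factorization p := by
    have h4 := congrArg (fun g => g.factorization p) hkey
    simp only [Nat.factorization_mul (by norm_num : (4:ℕ) ≠ 0) (pow_ne_zero 2 hs0),
      Nat.factorization_mul hM0 hn0, Nat.factorization_pow, Finsupp.add_apply,
      Finsupp.smul_apply, smul_eq_mul] at h4
    rw [Nat.factorization_eq_zero_of_not_dvd hpM, Nat.factorization_eq_zero_of_not_dvd hp4d] at h4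
    omega
  have hfb2 : (b ^ 2).factorization p = 2 * b.factorization p := by
    rw [Nat.factorization_pow]; simp
  -- valuation of u * c is exactly k
  have hq'c : ¬ p ∣ q' * c := fun h => by
    rcases (Nat.Prime.dvd_mul hp).mp h with h | h
    exacts [hpq' h, hpc h]
  have huc1 : p ^ k ∣ u * c := ⟨q' * c, by rw [hu]; ring⟩
  have huc2 : ¬ p ^ (k + 1) ∣ u * c := by
    intro h
    have : u * c = p ^ k * (q' * c) := by rw [hu]; ring
    rw [this, pow_succ] at h
    exact hq'c ((mul_dvd_mul_iff_left (pow_ne_zero k hp.pos.ne')).mp h)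
  set e : ℕ := b.factorization p with he_def
  by_cases hcase : k < 2 * e
  · -- Case A: valuation of n is k, odd, contradiction with evenness
    have hb2k1 : p ^ (k + 1) ∣ b ^ 2 :=
      (hp.pow_dvd_iff_le_factorization (pow_ne_zero 2 hb0)).mpr (by omega)
    have hnk : p ^ k ∣ n :=
      dvd_add (dvd_trans (pow_dvd_pow p (by omega)) hb2k1) huc1
    have hnk1 : ¬ p ^ (k + 1) ∣ n := by
      intro h
      have : u * c = n - b ^ 2 := by omega
      exact huc2 (this ▸ Nat.dvd_sub h hb2k1)
    have h5 : k ≤ n.factorization p := (hp.pow_dvd_iff_le_factorization hn0).mp hnk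
    have h6 : ¬ (k + 1 ≤ n.factorization p) :=
      fun h => hnk1 ((hp.pow_dvd_iff_le_factorization hn0).mpr h)
    omega
  · -- Case B: 2e < k
    have h2ek : 2 * e < k := by omega
    have hb2e : p ^ (2 * e) ∣ b ^ 2 :=
      (hp.pow_dvd_iff_le_factorization (pow_ne_zero 2 hb0)).mpr (by omega)
    have hn2e : p ^ (2 * e) ∣ n :=
      dvd_add hb2e (dvd_trans (pow_dvd_pow p (by omega)) huc1)
    have hn2e1 : ¬ p ^ (2 * e + 1) ∣ n := by
      intro h
      have huc3 : p ^ (2 * e + 1) ∣ u * c := dvd_trans (pow_dvd_pow p (by omega)) huc1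
      have hb2' : p ^ (2 * e + 1) ∣ b ^ 2 := by
        have : b ^ 2 = n - u * c := by omega
        exact this ▸ Nat.dvd_sub h huc3
      have := (hp.pow_dvd_iff_le_factorization (pow_ne_zero 2 hb0)).mp hb2'
      omega
    have hfn2 : n.factorization p = 2 * e := by
      have h5 := (hp.pow_dvd_iff_le_factorization hn0).mp hn2e
      have h6 : ¬ (2 * e + 1 ≤ n.factorization p) :=
        fun h => hn2e1 ((hp.pow_dvd_iff_le_factorization hn0).mpr h)
      omega
    have hse : s.factorization p = e := by omega
    -- split off p^e from b and s
    have hss'0 : p ^ e * (s / p ^ e) = s := by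
      have h := Nat.ordProj_mul_ordCompl_eq_self s p
      rwa [hse] at h
    have hps'0 : ¬ p ∣ (s / p ^ e) := by
      have h := Nat.not_dvd_ordCompl hp hs0
      rwa [hse] at h
    set b' : ℕ := b / p ^ e with hb'_def
    set s' : ℕ := s / p ^ e with hs'_def
    have hbb' : p ^ e * b' = b := Nat.ordProj_mul_ordCompl_eq_self b p
    have hss' : p ^ e * s' = s := hss'0
    have hpb' : ¬ p ∣ b' := Nat.not_dvd_ordCompl hp hb0
    have hps' : ¬ p ∣ s' := hps'0
    have hpk : p ^ (2 * e) * p ^ (k - 2 * e) = p ^ k := by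
      rw [← pow_add]; congr 1; omega
    have heq2 : 4 * s' ^ 2 = M * (b' ^ 2 + p ^ (k - 2 * e) * (q' * c)) := by
      have e1 : p ^ (2 * e) * (4 * s' ^ 2) = 4 * s ^ 2 := by
        rw [← hss']; ring
      have e2 : p ^ (2 * e) * (M * (b' ^ 2 + p ^ (k - 2 * e) * (q' * c))) = M * n := by
        rw [hn_def, ← hbb', hu, ← hpk]; ring
      have := hkey
      have e3 : p ^ (2 * e) * (4 * s' ^ 2) = p ^ (2 * e) * (M * (b' ^ 2 + p ^ (k - 2 * e) * (q' * c))) := by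
        rw [e1, e2, hkey]
      exact Nat.eq_of_mul_eq_mul_left (pow_pos hp.pos _) e3
    -- pass to ZMod p
    haveI : Fact p.Prime := ⟨hp⟩
    have hz := congrArg (Nat.cast : ℕ → ZMod p) heq2
    push_cast [hM_def, hc_def] at hz
    have hMz : 24 * (m₁ : ZMod p) + 2 = -1 := by
      have h0 : ((24 * m₁ + 3 : ℕ) : ZMod p) = 0 :=
        (ZMod.natCast_eq_zero_iff _ _).mpr (by simpa [hM_def] using hpM1)
      push_cast at h0
      linear_combination h0
    have hwz : ((p : ZMod p)) ^ (k - 2 * e) = 0 := by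
      rw [ZMod.natCast_self]; exact zero_pow (by omega)
    have hb'z : (b' : ZMod p) ≠ 0 := by
      rw [Ne, ZMod.natCast_eq_zero_iff]; exact hpb'
    have h4s : 4 * (s' : ZMod p) ^ 2 = -(b' : ZMod p) ^ 2 := by
      linear_combination hz + (b' : ZMod p) ^ 2 * hMz +
        ((24 * (m₁ : ZMod p) + 2) * ((q' : ZMod p) * (24 * (m₁ : ZMod p) + 1))) * hwz
    have hsq : (2 * (s' : ZMod p) * (b' : ZMod p)⁻¹) ^ 2 = -1 := by
      have hbinv : (b' : ZMod p) * (b' : ZMod p)⁻¹ = 1 := mul_inv_cancel₀ hb'z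
      field_simp
      linear_combination h4s
    have hsq' : IsSquare (-1 : ZMod p) := ⟨2 * (s' : ZMod p) * (b' : ZMod p)⁻¹, by
      rw [← hsq]; ring⟩
    rw [ZMod.exists_sq_eq_neg_one_iff] at hsq'
    exact hsq' hp4
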